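/- Let p be a prime and G a finite group such that G/O_{p'}(G) has characteristic p (i.e. the centralizer of O_p(G/O_{p'}(G)) in G/O_{p'}(G) is contained in O_p(G/O_{p'}(G))). Then for every p-subgroup Q of G one has O_{p'}(N_G(Q)) = O_{p'}(G) ∩ N_G(Q) = O_{p'}(G) ∩ C_G(Q). -/

import Mathlib

open Subgroup
open scoped commutatorElement

section Aux
variable {G : Type*} [Group G] {p : ℕ} [Fact p.Prime]

/-- A `p`-subgroup intersects a subgroup of order coprime to `p` trivially. -/
lemma aux_disjoint [Finite G] {A B : Subgroup G} (hA : IsPGroup p A)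
    (hB : (Nat.card B).Coprime p) : A ⊓ B = ⊥ := by
  have h1 : IsPGroup p ↥(A ⊓ B) := hA.to_inf_left
  obtain ⟨k, hk⟩ := (IsPGroup.iff_card).mp h1
  have h2 : Nat.card ↥(A ⊓ B) ∣ Nat.card B := card_dvd_of_le inf_le_right
  have h3 : (Nat.card ↥(A ⊓ B)).Coprime p := Nat.Coprime.coprime_dvd_left h2 hB
  rw [hk] at h3
  have hk0 : k = 0 := by
    by_contra h
    have hd : p ∣ p ^ k := dvd_pow_self p h
    have := ((Fact.out : p.Prime).coprime_iff_not_dvd).mp h3.symm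
    exact this hd
  rw [← Subgroup.card_eq_one, hk, hk0, pow_zero]

lemma aux_card_map_dvd {G' : Type*} [Group G'] (H : Subgroup G) (f : G →* G') :
    Nat.card (H.map f) ∣ Nat.card H := by
  have h1 : H.map f = (f.comp H.subtype).range := by
    rw [MonoidHom.range_comp, Subgroup.range_subtype]
  rw [h1]
  calc Nat.card (f.comp H.subtype).range
      = Nat.card (↥H ⧸ (f.comp H.subtype).ker) :=
        Nat.card_congr (QuotientGroup.quotientKerEquivRange _).symm.toEquiv
    _ ∣ Nat.card H := Subgroup.card_quotient_dvd_card _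

lemma aux_mem_normalizer_of_mem_centralizer {B : Subgroup G} {c : G}
    (hc : c ∈ centralizer (B : Set G)) : c ∈ Subgroup.normalizer (B : Set G) := by
  rw [mem_normalizer_iff]
  intro h
  constructor
  · intro hh
    have := (mem_centralizer_iff.mp hc) h hh
    rw [← this]; group; exact hh
  · intro hh
    have h1 := (mem_centralizer_iff.mp hc) _ hh
    have h2 : h = c * h * c⁻¹ := by
      have h4 : c * h = c * (c * h * c⁻¹) := by rw [← h1]; group
      exact mul_left_cancel h4
    rw [h2]; exact hh

lemma aux_map_conj_eq {S : Subgroup G} {u : G} (h : u ∈ Subgroup.normalizer (S : Set G)) :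
    S.map (MulAut.conj u).toMonoidHom = S := by
  ext x
  simp only [Subgroup.mem_map, MulAut.conj_apply, MulEquiv.coe_toMonoidHom]
  rw [mem_normalizer_iff] at h
  constructor
  · rintro ⟨y, hy, rfl⟩
    exact (h y).mp hy
  · intro hx
    exact ⟨u⁻¹ * x * u, by
      have := (h (u⁻¹ * x * u)).mpr
      apply this
      have : u * (u⁻¹ * x * u) * u⁻¹ = x := by group
      rw [this]; exact hx, by group⟩

lemma aux_mem_normalizer_commutator {P B : Subgroup G} {u : G}
    (hu1 : u ∈ Subgroup.normalizer (P : Set G)) (hu2 : u ∈ Subgroup.normalizer (B : Set G)) : u ∈ Subgroup.normalizer ((⁅P, B⁆ : Subgroup G) : Set G) := by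
  have hmap : ⁅P, B⁆.map (MulAut.conj u).toMonoidHom = ⁅P, B⁆ := by
    rw [Subgroup.map_commutator, aux_map_conj_eq hu1, aux_map_conj_eq hu2]
  rw [mem_normalizer_iff]
  intro h
  constructor
  · intro hh
    rw [← hmap]
    exact ⟨h, hh, rfl⟩
  · intro hh
    rw [← hmap] at hh
    obtain ⟨y, hy, hyx⟩ := hh
    simp only [MulAut.conj_apply, MulEquiv.coe_toMonoidHom] at hyx
    have : y = h := by
      have := mul_left_cancel (a := u) (b := y * u⁻¹) (c := h * u⁻¹) (by
        rw [← mul_assoc, ← mul_assoc, hyx])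
      exact mul_right_cancel this
    rwa [← this]

lemma aux_commutator_le_left {P B : Subgroup G} (h : B ≤ Subgroup.normalizer (P : Set G)) : ⁅P, B⁆ ≤ P := by
  rw [Subgroup.commutator_le]
  intro x hx b hb
  have hb' := h hb
  rw [mem_normalizer_iff] at hb'
  have : b * x⁻¹ * b⁻¹ ∈ P := (hb' x⁻¹).mp (inv_mem hx)
  have he : ⁅x, b⁆ = x * (b * x⁻¹ * b⁻¹) := by
    rw [commutatorElement_def]; group
  rw [he]
  exact mul_mem hx this

end Aux

open Subgroup

section Pointwise
variable {G : Type*} [Group G]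

lemma aux_conj_pow_eq {x c : G} (hm : Commute (x⁻¹ * c⁻¹ * x * c) c) :
    ∀ k : ℕ, (c ^ k)⁻¹ * x * c ^ k = x * (x⁻¹ * c⁻¹ * x * c) ^ k := by
  set m := x⁻¹ * c⁻¹ * x * c with hmdef
  intro k
  induction k with
  | zero => simp
  | succ k ih =>
    have h1 : c ^ (k + 1) = c ^ k * c := by rw [pow_succ]
    rw [h1, mul_inv_rev]
    have h2 : c⁻¹ * ((c ^ k)⁻¹ * x * c ^ k) * c = c⁻¹ * (x * m ^ k) * c := by rw [ih]
    calc c⁻¹ * (c ^ k)⁻¹ * x * (c ^ k * c) = c⁻¹ * ((c ^ k)⁻¹ * x * c ^ k) * c := by group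
      _ = c⁻¹ * (x * m ^ k) * c := h2
      _ = (c⁻¹ * x * c) * (c⁻¹ * m ^ k * c) := by group
      _ = (x * m) * (c⁻¹ * (m ^ k * c)) := by rw [hmdef]; group
      _ = (x * m) * (c⁻¹ * (c * m ^ k)) := by rw [(hm.pow_left k).eq]
      _ = (x * m) * m ^ k := by group
      _ = x * m ^ (k + 1) := by rw [pow_succ']; group

lemma aux_commute_pow {x c : G} (hm : Commute (x⁻¹ * c⁻¹ * x * c) c) {e : ℕ}
    (he : (x⁻¹ * c⁻¹ * x * c) ^ e = 1) : Commute x (c ^ e) := by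
  have h := aux_conj_pow_eq hm e
  rw [he, mul_one] at h
  show x * c ^ e = c ^ e * x
  calc x * c ^ e = c ^ e * ((c ^ e)⁻¹ * x * c ^ e) := by group
    _ = c ^ e * x := by rw [h]

lemma aux_commute_of_coprime {x c : G} {e : ℕ} (hc : Commute x (c ^ e))
    (h : (orderOf c).Coprime e) : Commute x c := by
  obtain ⟨a, b, hab⟩ := (Nat.isCoprime_iff_coprime.mpr h.symm)
  have h1 : c = (c ^ e) ^ a * (c ^ (orderOf c : ℕ)) ^ b := by
    rw [← zpow_natCast c e, ← zpow_natCast c (orderOf c), ← zpow_mul, ← zpow_mul, ← zpow_add,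
      mul_comm (e : ℤ) a, mul_comm ((orderOf c : ℕ) : ℤ) b, hab, zpow_one]
  rw [h1, pow_orderOf_eq_one, one_zpow, mul_one]
  exact (hc.zpow_right a)
end Pointwise
section Thompson
variable {Γ : Type*} [Group Γ] [Finite Γ] {p : ℕ} [Fact p.Prime]

lemma thompson_aux (B C : Subgroup Γ) (hC : (Nat.card C).Coprime p)
    (hCB : C ≤ centralizer (B : Set Γ)) :
    ∀ (n : ℕ) (P : Subgroup Γ), IsPGroup p P → B ≤ Subgroup.normalizer (P : Set Γ) → C ≤ Subgroup.normalizer (P : Set Γ) →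
      (P ⊓ centralizer (B : Set Γ) ≤ centralizer (C : Set Γ)) →
      ((fun X => ⁅X, B⁆)^[n] P = ⊥) → C ≤ centralizer (P : Set Γ) := by
  intro n
  induction n with
  | zero =>
    intro P _ _ _ _ hbot
    simp only [Function.iterate_zero, id_eq] at hbot
    subst hbot
    intro c _
    rw [mem_centralizer_iff]
    rintro g hg
    rw [show g = 1 from hg]
    group
  | succ n ih =>
    intro P hP hBP hCP key hbot
    -- the commutator subgroup
    have hPB_le : ⁅P, B⁆ ≤ P := aux_commutator_le_left hBP
    have hPB_p : IsPGroup p ↥⁅P, B⁆ := hP.to_le hPB_le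
    have hB_PB : B ≤ Subgroup.normalizer ((⁅P, B⁆ : Subgroup Γ) : Set Γ) := fun b hb =>
      aux_mem_normalizer_commutator (hBP hb) (Subgroup.le_normalizer hb)
    have hC_PB : C ≤ Subgroup.normalizer ((⁅P, B⁆ : Subgroup Γ) : Set Γ) := fun c hc =>
      aux_mem_normalizer_commutator (hCP hc) (aux_mem_normalizer_of_mem_centralizer (hCB hc))
    have key' : ⁅P, B⁆ ⊓ centralizer (B : Set Γ) ≤ centralizer (C : Set Γ) :=
      le_trans (inf_le_inf_right _ hPB_le) key
    have hbot' : (fun X => ⁅X, B⁆)^[n] ⁅P, B⁆ = ⊥ := by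
      rw [← Function.iterate_succ_apply]
      exact hbot
    have hC1 : C ≤ centralizer ((⁅P, B⁆ : Subgroup Γ) : Set Γ) := ih ⁅P, B⁆ hPB_p hB_PB hC_PB key' hbot'
    -- three subgroups lemma
    have h1 : ⁅⁅C, B⁆, P⁆ = ⊥ := by
      have : ⁅C, B⁆ = ⊥ := Subgroup.commutator_eq_bot_iff_le_centralizer.mpr hCB
      rw [this]
      exact Subgroup.commutator_bot_left _
    have h2 : ⁅⁅B, P⁆, C⁆ = ⊥ := by
      rw [Subgroup.commutator_comm B P]
      exact Subgroup.commutator_eq_bot_iff_le_centralizer.mpr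
        (Subgroup.le_centralizer_iff.mp hC1)
    have h3 : ⁅⁅P, C⁆, B⁆ = ⊥ := Subgroup.commutator_commutator_eq_bot_of_rotate h1 h2
    have hPC_P : ⁅P, C⁆ ≤ P := aux_commutator_le_left hCP
    have hPC_cB : ⁅P, C⁆ ≤ centralizer (B : Set Γ) :=
      Subgroup.commutator_eq_bot_iff_le_centralizer.mp h3
    have hPC_cC : ⁅P, C⁆ ≤ centralizer (C : Set Γ) := fun m hm =>
      key ⟨hPC_P hm, hPC_cB hm⟩
    -- pointwise argument
    intro c hc
    rw [mem_centralizer_iff]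
    intro x hx
    set m := x⁻¹ * c⁻¹ * x * c with hmdef
    have hmPC : m ∈ ⁅P, C⁆ := by
      have heq : (⁅x⁻¹, c⁻¹⁆ : Γ) = m := by rw [commutatorElement_def, hmdef]; group
      rw [← heq]
      exact Subgroup.commutator_mem_commutator (inv_mem hx) (inv_mem hc)
    have hmP : m ∈ P := hPC_P hmPC
    have hmc : Commute m c := by
      have h5 := (mem_centralizer_iff.mp (hPC_cC hmPC)) c hc
      exact h5.symm
    obtain ⟨k, hk⟩ := (IsPGroup.iff_card (p := p) (G := ↥P)).mp hP
    have hme : m ^ (p ^ k) = 1 := by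
      have hdvd : orderOf m ∣ p ^ k := by
        rw [← hk]
        exact Subgroup.orderOf_dvd_natCard P hmP
      exact orderOf_dvd_iff_pow_eq_one.mp hdvd
    have hcom : Commute x (c ^ (p ^ k)) := aux_commute_pow hmc hme
    have hco : (orderOf c).Coprime (p ^ k) := by
      have hdvd : orderOf c ∣ Nat.card C := Subgroup.orderOf_dvd_natCard C hc
      exact (Nat.Coprime.coprime_dvd_left hdvd hC).pow_right k
    exact (aux_commute_of_coprime hcom hco).eq

/-- Thompson's `P × Q` lemma, subgroup version. -/
lemma thompson (P B C : Subgroup Γ) (hP : IsPGroup p P) (hB : IsPGroup p B)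
    (hC : (Nat.card C).Coprime p) (hCB : C ≤ centralizer (B : Set Γ))
    (hBP : B ≤ Subgroup.normalizer (P : Set Γ)) (hCP : C ≤ Subgroup.normalizer (P : Set Γ))
    (key : P ⊓ centralizer (B : Set Γ) ≤ centralizer (C : Set Γ)) :
    C ≤ centralizer (P : Set Γ) := by
  -- find n with the iterated commutator trivial
  have hSp : IsPGroup p ↥(B ⊔ P) := IsPGroup.to_sup_of_normal_right' hB hP hBP
  have hnil : Group.IsNilpotent ↥(B ⊔ P) := hSp.isNilpotent
  obtain ⟨n, hn⟩ := _root_.nilpotent_iff_lowerCentralSeries.mp hnil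
  set S := B ⊔ P with hS
  have hiter : ∀ k : ℕ, (fun X => ⁅X, B⁆)^[k] P ≤ Subgroup.map S.subtype
      ((⊤ : Subgroup ↥S).lowerCentralSeries k) := by
    intro k
    induction k with
    | zero =>
      simp only [Function.iterate_zero, id_eq, _root_.lowerCentralSeries_zero]
      have hms : Subgroup.map S.subtype ⊤ = S := by
        rw [← MonoidHom.range_eq_map, Subgroup.range_subtype]
      rw [hms]
      exact le_sup_right
    | succ k ihk =>
      rw [Function.iterate_succ_apply', _root_.lowerCentralSeries_succ]
      calc ⁅(fun X => ⁅X, B⁆)^[k] P, B⁆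
          ≤ ⁅Subgroup.map S.subtype ((⊤ : Subgroup ↥S).lowerCentralSeries k), Subgroup.map S.subtype ⊤⁆ := by
            apply Subgroup.commutator_mono ihk
            have hms : Subgroup.map S.subtype ⊤ = S := by
              rw [← MonoidHom.range_eq_map, Subgroup.range_subtype]
            rw [hms]
            exact le_sup_left
        _ = Subgroup.map S.subtype ⁅(⊤ : Subgroup ↥S).lowerCentralSeries k, ⊤⁆ :=
            (Subgroup.map_commutator _ _ _).symm
  have hbot : (fun X => ⁅X, B⁆)^[n] P = ⊥ := by
    have := hiter n
    rw [hn] at this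
    simpa using this
  exact thompson_aux B C hC hCB n P hP hBP hCP key hbot

end Thompson
section Core
variable {H : Type*} [Group H] [Finite H] {p : ℕ} [Fact p.Prime]

lemma exists_isPCore :
    ∃ P : Subgroup H, P.Normal ∧ IsPGroup p ↥P ∧
      ∀ Q : Subgroup H, Q.Normal → IsPGroup p ↥Q → Q ≤ P := by
  classical
  set s : Set ℕ := {n | ∃ P : Subgroup H, P.Normal ∧ IsPGroup p ↥P ∧ Nat.card ↥P = n} with hs
  have hne : s.Nonempty := ⟨Nat.card ↥(⊥ : Subgroup H), ⊥, inferInstance, IsPGroup.of_bot, rfl⟩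
  have hbdd : BddAbove s := by
    refine ⟨Nat.card H, ?_⟩
    rintro n ⟨P, -, -, rfl⟩
    exact Nat.le_of_dvd Nat.card_pos (Subgroup.card_subgroup_dvd_card P)
  obtain ⟨P, hPn, hPp, hPc⟩ := Nat.sSup_mem hne hbdd
  refine ⟨P, hPn, hPp, fun Q hQn hQp => ?_⟩
  haveI := hPn
  haveI := hQn
  have hsup_n : (Q ⊔ P).Normal := Subgroup.sup_normal Q P
  have hsup_p : IsPGroup p ↥(Q ⊔ P) := IsPGroup.to_sup_of_normal_right hQp hPp
  have hmem : Nat.card ↥(Q ⊔ P) ∈ s := ⟨Q ⊔ P, hsup_n, hsup_p, rfl⟩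
  have hle : Nat.card ↥(Q ⊔ P) ≤ Nat.card ↥P := by
    rw [hPc]
    exact le_csSup hbdd hmem
  have heq : P = Q ⊔ P := Subgroup.eq_of_le_of_card_ge le_sup_right hle
  exact le_trans le_sup_left heq.ge
end Core
section Conj
open Pointwise
variable {G : Type*} [Group G] [Finite G] {p : ℕ} [Fact p.Prime]

lemma aux_mem_normalizer_of_map_conj_eq {Q : Subgroup G} {u : G}
    (h : Q.map (MulAut.conj u).toMonoidHom = Q) : u ∈ Subgroup.normalizer (Q : Set G) := by
  rw [mem_normalizer_iff]
  intro x
  constructor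
  · intro hx
    rw [← h]
    exact ⟨x, hx, rfl⟩
  · intro hx
    rw [← h] at hx
    obtain ⟨y, hy, hyx⟩ := hx
    simp only [MulAut.conj_apply, MulEquiv.coe_toMonoidHom] at hyx
    have : y = x := by
      have h1 := mul_left_cancel (a := u) (b := y * u⁻¹) (c := x * u⁻¹) (by
        rw [← mul_assoc, ← mul_assoc, hyx])
      exact mul_right_cancel h1
    rwa [← this]

lemma exists_mul_mem_normalizer {Q N : Subgroup G} [N.Normal] (hQ : IsPGroup p Q)
    (hN : (Nat.card N).Coprime p) {g : G} (hg : ∀ q ∈ Q, g⁻¹ * q * g ∈ Q ⊔ N) :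
    ∃ j ∈ Q ⊔ N, g * j ∈ Subgroup.normalizer (Q : Set G) := by
  set J := Q ⊔ N with hJ
  -- any p-subgroup between Q and J equals Q
  have claim : ∀ T : Subgroup G, IsPGroup p T → Q ≤ T → T ≤ J → T = Q := by
    intro T hT hQT hTJ
    refine le_antisymm (fun t ht => ?_) hQT
    have htJ : t ∈ (Q : Set G) * (N : Set G) := by
      rw [← Subgroup.mul_normal Q N]
      exact hTJ ht
    obtain ⟨q, hq, n, hn, rfl⟩ := htJ
    have hnT : n ∈ T := by
      have : n = q⁻¹ * (q * n) := by group
      rw [this]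
      exact mul_mem (inv_mem (hQT hq)) ht
    have : n ∈ T ⊓ N := ⟨hnT, hn⟩
    rw [aux_disjoint hT hN] at this
    have hn1 : n = 1 := this
    rw [hn1]
    simpa using hq
  -- the conjugate subgroup
  set Qg := Q.map (MulAut.conj g⁻¹).toMonoidHom with hQg
  have hQg_le : Qg ≤ J := by
    rintro x ⟨q, hq, rfl⟩
    simpa using hg q hq
  have hQg_p : IsPGroup p ↥Qg := hQ.map _
  have hQg_card : Nat.card ↥Qg = Nat.card ↥Q :=
    (Nat.card_congr (Subgroup.equivMapOfInjective Q _ (MulAut.conj g⁻¹).injective).toEquiv).symm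
  -- Sylow subgroups of J
  have hQ' : IsPGroup p ↥(Q.subgroupOf J) := hQ.comap_of_injective J.subtype J.subtype_injective
  have hQ'' : IsPGroup p ↥(Qg.subgroupOf J) := hQg_p.comap_of_injective J.subtype J.subtype_injective
  obtain ⟨S1, hS1⟩ := hQ'.exists_le_sylow
  obtain ⟨S2, hS2⟩ := hQ''.exists_le_sylow
  -- map of Sylow back to G
  have hmap_smul : ∀ (j : ↥J) (X : Subgroup ↥J),
      Subgroup.map J.subtype (MulAut.conj j • X) = (MulAut.conj (j : G)) • (Subgroup.map J.subtype X) := by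
    intro j X
    rw [Subgroup.pointwise_smul_def, Subgroup.pointwise_smul_def]
    show Subgroup.map J.subtype (Subgroup.map (MulAut.conj j).toMonoidHom X) =
      Subgroup.map (MulAut.conj (j : G)).toMonoidHom (Subgroup.map J.subtype X)
    rw [Subgroup.map_map, Subgroup.map_map]
    congr 1
  have hmapS1 : Subgroup.map J.subtype ↑S1 = Q := by
    apply claim
    · exact S1.isPGroup'.map _
    · have : Q.subgroupOf J ≤ (S1 : Subgroup ↥J) := hS1
      have h2 := Subgroup.map_mono (f := J.subtype) this
      rwa [Subgroup.subgroupOf_map_subtype, inf_eq_left.mpr (le_sup_left : Q ≤ J)] at h2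
    · exact Subgroup.map_subtype_le _
  have hQg_le_mapS2 : Qg ≤ Subgroup.map J.subtype ↑S2 := by
    have h2 := Subgroup.map_mono (f := J.subtype) hS2
    rwa [Subgroup.subgroupOf_map_subtype, inf_eq_left.mpr hQg_le] at h2
  -- Sylow conjugacy
  obtain ⟨j, hj⟩ := MulAction.exists_smul_eq (↥J) S1 S2
  have hS2coe : (S2 : Subgroup ↥J) = MulAut.conj j • (S1 : Subgroup ↥J) := by
    rw [← hj]; rfl
  have hmapS2 : Subgroup.map J.subtype ↑S2 = MulAut.conj (j : G) • Q := by
    rw [hS2coe, hmap_smul, hmapS1]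
  -- compare cards
  have hcard_smul : Nat.card ↥(MulAut.conj (j : G) • Q) = Nat.card ↥Q := by
    rw [Subgroup.pointwise_smul_def]
    exact (Nat.card_congr (Subgroup.equivMapOfInjective Q _
      ((MulAut.conj (j : G)).injective)).toEquiv).symm
  have hQg_eq : Qg = MulAut.conj (j : G) • Q := by
    apply Subgroup.eq_of_le_of_card_ge (hmapS2 ▸ hQg_le_mapS2)
    rw [hcard_smul, hQg_card]
  -- conclude
  refine ⟨(j : G), (by exact j.2 : (j : G) ∈ J), ?_⟩
  apply aux_mem_normalizer_of_map_conj_eq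
  have h1 : Q.map (MulAut.conj g⁻¹).toMonoidHom = Q.map (MulAut.conj (j : G)).toMonoidHom := by
    rw [← hQg, hQg_eq, Subgroup.pointwise_smul_def]; rfl
  have h2 := congrArg (Subgroup.map (MulAut.conj g).toMonoidHom) h1
  rw [Subgroup.map_map, Subgroup.map_map] at h2
  have h3 : (MulAut.conj g).toMonoidHom.comp (MulAut.conj g⁻¹).toMonoidHom =
      MonoidHom.id G := by ext x; simp; group
  have h4 : (MulAut.conj g).toMonoidHom.comp (MulAut.conj (j : G)).toMonoidHom =
      (MulAut.conj (g * (j : G))).toMonoidHom := by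
      ext x; simp only [MonoidHom.comp_apply, MulEquiv.coe_toMonoidHom, MulAut.conj_apply]; group
  rw [h3, h4] at h2
  rw [← h2, Subgroup.map_id]
end Conj
lemma aux_comm_of_conj_eq_one {G : Type*} [Group G] {a b : G}
    (h : a⁻¹ * b⁻¹ * a * b = 1) : b * a = a * b := by
  have h4 : (b * a)⁻¹ * (a * b) = 1 := by
    rw [← h]; group
  exact inv_mul_eq_one.mp h4

/-- `P` is the largest normal `p`-subgroup `O_p(G)` of `G`. -/
def IsPCore (p : ℕ) {G : Type*} [Group G] (P : Subgroup G) : Prop :=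
  P.Normal ∧ IsPGroup p ↥P ∧ ∀ Q : Subgroup G, Q.Normal → IsPGroup p ↥Q → Q ≤ P

/-- `N` is the largest normal `p'`-subgroup `O_{p'}(G)` of `G`. -/
def IsPPrimeCore (p : ℕ) {G : Type*} [Group G] (N : Subgroup G) : Prop :=
  N.Normal ∧ (Nat.card ↥N).Coprime p ∧
    ∀ M : Subgroup G, M.Normal → (Nat.card ↥M).Coprime p → M ≤ N

/-- If `G/O_{p'}(G)` has characteristic `p`, then for every `p`-subgroup `Q` of `G`,
`O_{p'}(N_G(Q)) = O_{p'}(G) ∩ N_G(Q) = O_{p'}(G) ∩ C_G(Q)`. -/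
theorem pPrimeCore_normalizer_of_quotient_char_p
    {G : Type*} [Group G] [Finite G] {p : ℕ} [Fact p.Prime]
    (N : Subgroup G) [N.Normal] (hN : IsPPrimeCore p N)
    (hchar : ∀ P' : Subgroup (G ⧸ N), IsPCore p P' →
      Subgroup.centralizer (P' : Set (G ⧸ N)) ≤ P')
    (Q : Subgroup G) (hQ : IsPGroup p ↥Q) :
    (∀ K : Subgroup ↥(Subgroup.normalizer (Q : Set G)), IsPPrimeCore p K →
      K.map (Subgroup.normalizer (Q : Set G)).subtype = N ⊓ (Subgroup.normalizer (Q : Set G))) ∧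
    N ⊓ (Subgroup.normalizer (Q : Set G)) = N ⊓ Subgroup.centralizer (Q : Set G) := by
  obtain ⟨hNnorm, hNco, hNmax⟩ := hN
  -- Second equality
  have hNQC : N ⊓ (Subgroup.normalizer (Q : Set G)) = N ⊓ Subgroup.centralizer (Q : Set G) := by
    apply le_antisymm
    · rintro x ⟨hxN, hxNQ⟩
      refine ⟨hxN, Subgroup.mem_centralizer_iff.mpr fun q hq => ?_⟩
      have huQ : x⁻¹ * q⁻¹ * x * q ∈ Q := by
        have h1 : x⁻¹ * q⁻¹ * x ∈ Q := (Subgroup.mem_normalizer_iff''.mp hxNQ q⁻¹).mp (inv_mem hq)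
        have h2 : x⁻¹ * q⁻¹ * x * q = (x⁻¹ * q⁻¹ * x) * q := by group
        rw [h2]; exact mul_mem h1 hq
      have huN : x⁻¹ * q⁻¹ * x * q ∈ N := by
        have h1 : q⁻¹ * x * q ∈ N := by
          have := hNnorm.conj_mem x hxN q⁻¹
          simpa using this
        have h2 : x⁻¹ * q⁻¹ * x * q = x⁻¹ * (q⁻¹ * x * q) := by group
        rw [h2]; exact mul_mem (inv_mem hxN) h1
      have hmem : x⁻¹ * q⁻¹ * x * q ∈ Q ⊓ N := ⟨huQ, huN⟩
      rw [aux_disjoint hQ hNco] at hmem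
      exact aux_comm_of_conj_eq_one hmem
    · rintro x ⟨hxN, hxC⟩
      exact ⟨hxN, aux_mem_normalizer_of_mem_centralizer hxC⟩
  refine ⟨?_, hNQC⟩
  intro K hK
  obtain ⟨hKnorm, hKco, hKmax⟩ := hK
  set K' := K.map (Subgroup.normalizer (Q : Set G)).subtype with hK'
  have hK'card : Nat.card ↥K' = Nat.card ↥K :=
    (Nat.card_congr (Subgroup.equivMapOfInjective K _ (Subgroup.subtype_injective _)).toEquiv).symm
  have hK'co : (Nat.card ↥K').Coprime p := by rw [hK'card]; exact hKco
  have hK'NQ : K' ≤ (Subgroup.normalizer (Q : Set G)) := Subgroup.map_subtype_le K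
  -- the easy inclusion
  have hsub : N ⊓ (Subgroup.normalizer (Q : Set G)) ≤ K' := by
    have hM_card : Nat.card ↥(N.subgroupOf (Subgroup.normalizer (Q : Set G))) = Nat.card ↥(N ⊓ (Subgroup.normalizer (Q : Set G))) := by
      rw [← Subgroup.subgroupOf_map_subtype]
      exact Nat.card_congr (Subgroup.equivMapOfInjective _ _ (Subgroup.subtype_injective _)).toEquiv
    have hM_co : (Nat.card ↥(N.subgroupOf (Subgroup.normalizer (Q : Set G)))).Coprime p := by
      rw [hM_card]
      exact Nat.Coprime.coprime_dvd_left (Subgroup.card_dvd_of_le inf_le_left) hNco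
    have hMK := hKmax _ (Subgroup.normal_subgroupOf) hM_co
    have h2 := Subgroup.map_mono (f := (Subgroup.normalizer (Q : Set G)).subtype) hMK
    rwa [Subgroup.subgroupOf_map_subtype] at h2
  -- K' is normalized by the normalizer of Q
  have hKconj : ∀ u ∈ (Subgroup.normalizer (Q : Set G)), ∀ k ∈ K', u * k * u⁻¹ ∈ K' := by
    intro u hu k hk
    obtain ⟨k₀, hk₀, rfl⟩ := hk
    have h1 := hKnorm.conj_mem k₀ hk₀ ⟨u, hu⟩
    exact ⟨_, h1, rfl⟩
  -- K' centralizes Q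
  have hK'C : K' ≤ Subgroup.centralizer (Q : Set G) := by
    intro k hk
    rw [Subgroup.mem_centralizer_iff]
    intro q hq
    have hkNQ : k ∈ (Subgroup.normalizer (Q : Set G)) := hK'NQ hk
    have huQ : k⁻¹ * q⁻¹ * k * q ∈ Q := by
      have h1 : k⁻¹ * q⁻¹ * k ∈ Q := (Subgroup.mem_normalizer_iff''.mp hkNQ q⁻¹).mp (inv_mem hq)
      have h2 : k⁻¹ * q⁻¹ * k * q = (k⁻¹ * q⁻¹ * k) * q := by group
      rw [h2]; exact mul_mem h1 hq
    have huK' : k⁻¹ * q⁻¹ * k * q ∈ K' := by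
      have h1 : q⁻¹ * k * q ∈ K' := by
        have := hKconj q⁻¹ (inv_mem (Subgroup.le_normalizer hq)) k hk
        simpa using this
      have h2 : k⁻¹ * q⁻¹ * k * q = k⁻¹ * (q⁻¹ * k * q) := by group
      rw [h2]; exact mul_mem (inv_mem hk) h1
    have hmem : k⁻¹ * q⁻¹ * k * q ∈ Q ⊓ K' := ⟨huQ, huK'⟩
    rw [aux_disjoint hQ hK'co] at hmem
    exact aux_comm_of_conj_eq_one hmem
  -- quotient setup
  set π := QuotientGroup.mk' N with hπ
  obtain ⟨P, hPnorm, hPp, hPmax⟩ := exists_isPCore (H := G ⧸ N) (p := p)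
  have hCP : Subgroup.centralizer (P : Set (G ⧸ N)) ≤ P := hchar P ⟨hPnorm, hPp, hPmax⟩
  set R := Q.map π with hR
  set X := K'.map π with hX
  have hRp : IsPGroup p ↥R := hQ.map π
  have hXco : (Nat.card ↥X).Coprime p :=
    Nat.Coprime.coprime_dvd_left (aux_card_map_dvd K' π) hK'co
  have hXcR : X ≤ Subgroup.centralizer (R : Set (G ⧸ N)) := by
    rintro x ⟨k, hk, rfl⟩
    rw [Subgroup.mem_centralizer_iff]
    rintro r ⟨q, hq, rfl⟩
    have h1 := Subgroup.mem_centralizer_iff.mp (hK'C hk) q hq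
    show π q * π k = π k * π q
    rw [← map_mul, ← map_mul, h1]
  have hPtop : (Subgroup.normalizer (P : Set (G ⧸ N))) = ⊤ := Subgroup.normalizer_eq_top_iff.mpr hPnorm
  -- the image of the normalizer of Q normalizes X
  have hπnorm : ∀ u ∈ (Subgroup.normalizer (Q : Set G)), π u ∈ (Subgroup.normalizer (X : Set (G ⧸ N))) := by
    intro u hu
    rw [Subgroup.mem_normalizer_iff]
    intro y
    constructor
    · rintro ⟨k, hk, rfl⟩
      exact ⟨u * k * u⁻¹, hKconj u hu k hk, by rw [map_mul, map_mul, map_inv]⟩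
    · rintro ⟨k, hk, hkeq⟩
      have h1 : y = π (u⁻¹ * k * u) := by
        rw [map_mul, map_mul, map_inv]
        have := congrArg (fun z => (π u)⁻¹ * z * (π u)) hkeq
        calc y = (π u)⁻¹ * (π u * y * (π u)⁻¹) * π u := by group
          _ = (π u)⁻¹ * π k * π u := by rw [← this]
      rw [h1]
      exact ⟨u⁻¹ * k * u, by
        have := hKconj u⁻¹ (inv_mem hu) k hk
        simpa using this, rfl⟩
  -- key hypothesis for Thompson's lemma
  have hkey : P ⊓ Subgroup.centralizer (R : Set (G ⧸ N)) ≤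
      Subgroup.centralizer (X : Set (G ⧸ N)) := by
    rintro h ⟨hhP, hhC⟩
    obtain ⟨g, rfl⟩ := QuotientGroup.mk'_surjective N h
    rw [← hπ] at hhP hhC ⊢
    have hg : ∀ q ∈ Q, g⁻¹ * q * g ∈ Q ⊔ N := by
      intro q hq
      have hcomm := Subgroup.mem_centralizer_iff.mp hhC (π q) ⟨q, hq, rfl⟩
      have h1 : π (g⁻¹ * q * g * q⁻¹) = 1 := by
        rw [map_mul, map_mul, map_mul, map_inv, map_inv]
        calc (π g)⁻¹ * π q * π g * (π q)⁻¹
            = (π g)⁻¹ * (π q * π g) * (π q)⁻¹ := by group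
          _ = (π g)⁻¹ * (π g * π q) * (π q)⁻¹ := by rw [hcomm]
          _ = 1 := by group
      have h2 : g⁻¹ * q * g * q⁻¹ ∈ N := by
        have h3 : g⁻¹ * q * g * q⁻¹ ∈ π.ker := h1
        rwa [QuotientGroup.ker_mk'] at h3
      have h4 : g⁻¹ * q * g = (g⁻¹ * q * g * q⁻¹) * q := by group
      rw [h4]
      exact mul_mem (Subgroup.mem_sup_right h2) (Subgroup.mem_sup_left hq)
    obtain ⟨j, hjJ, hgj⟩ := exists_mul_mem_normalizer hQ hNco hg
    have hπj_R : π j ∈ R := by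
      have h1 : π j ∈ (Q ⊔ N).map π := ⟨j, hjJ, rfl⟩
      rw [Subgroup.map_sup] at h1
      have hmapN : N.map π = ⊥ := by
        rw [eq_bot_iff]
        rintro y ⟨n, hn, rfl⟩
        show π n ∈ ⊥
        rw [Subgroup.mem_bot, ← MonoidHom.mem_ker, QuotientGroup.ker_mk']
        exact hn
      rwa [hmapN, sup_bot_eq] at h1
    have hπj_norm : π j ∈ (Subgroup.normalizer (X : Set (G ⧸ N))) :=
      aux_mem_normalizer_of_mem_centralizer (Subgroup.le_centralizer_iff.mp hXcR hπj_R)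
    have hnorm : π g ∈ (Subgroup.normalizer (X : Set (G ⧸ N))) := by
      have h1 : π g = π (g * j) * (π j)⁻¹ := by rw [map_mul]; group
      rw [h1]
      exact mul_mem (hπnorm _ hgj) (inv_mem hπj_norm)
    -- conclude that π g centralizes X
    rw [Subgroup.mem_centralizer_iff]
    intro x hx
    have huX : (π g)⁻¹ * x⁻¹ * π g * x ∈ X := by
      have h1 : (π g)⁻¹ * x⁻¹ * π g ∈ X :=
        (Subgroup.mem_normalizer_iff''.mp hnorm x⁻¹).mp (inv_mem hx)
      have h2 : (π g)⁻¹ * x⁻¹ * π g * x = ((π g)⁻¹ * x⁻¹ * π g) * x := by group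
      rw [h2]; exact mul_mem h1 hx
    have huP : (π g)⁻¹ * x⁻¹ * π g * x ∈ P := by
      have h1 : x⁻¹ * π g * x ∈ P := by
        have := hPnorm.conj_mem (π g) hhP x⁻¹
        simpa using this
      have h2 : (π g)⁻¹ * x⁻¹ * π g * x = (π g)⁻¹ * (x⁻¹ * π g * x) := by group
      rw [h2]; exact mul_mem (inv_mem hhP) h1
    have hmem : (π g)⁻¹ * x⁻¹ * π g * x ∈ P ⊓ X := ⟨huP, huX⟩
    rw [aux_disjoint hPp hXco] at hmem
    exact aux_comm_of_conj_eq_one hmem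
  -- apply Thompson's lemma
  have hXcentP : X ≤ Subgroup.centralizer (P : Set (G ⧸ N)) :=
    thompson P R X hPp hRp hXco hXcR (hPtop ▸ le_top) (hPtop ▸ le_top) hkey
  have hXP : X ≤ P := le_trans hXcentP hCP
  have hXbot : X = ⊥ := by
    rw [eq_bot_iff, ← aux_disjoint hPp hXco]
    exact le_inf hXP le_rfl
  have hK'N : K' ≤ N := by
    calc K' ≤ (K'.map π).comap π := Subgroup.le_comap_map π K'
      _ = (⊥ : Subgroup (G ⧸ N)).comap π := by rw [show K'.map π = ⊥ from hXbot]
      _ = π.ker := π.comap_bot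
      _ = N := QuotientGroup.ker_mk' N
  exact le_antisymm (le_inf hK'N hK'NQ) hsub
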